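/- For m ≥ 0 let k_1(m) denote the unique solution in [π/4, π/2] of m·sin(2k) + k·cos(2k) = 0. Then there exist constants C > 0 and m_0 > 0 such that for all m ∈ [0, m_0] one has |k_1(m) − (π/4 + (2/π)m − (16/π³)m²)| ≤ C·m³. -/

import Mathlib

open Real

set_option maxHeartbeats 1000000 in
/-- Asymptotic expansion `k_1(m) = π/4 + (2/π)m − (16/π³)m² + O(m³)` as `m → 0`,
where `k_1(m)` is the unique solution in `[π/4, π/2]` of `m·sin(2k) + k·cos(2k) = 0`. -/
theorem k1_asymptotic_expansion (k1 : ℝ → ℝ)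
    (hk1 : ∀ m : ℝ, 0 ≤ m → k1 m ∈ Set.Icc (π / 4) (π / 2) ∧
      m * Real.sin (2 * k1 m) + k1 m * Real.cos (2 * k1 m) = 0) :
    ∃ C > 0, ∃ m0 > 0, ∀ m ∈ Set.Icc (0 : ℝ) m0,
      |k1 m - (π / 4 + (2 / π) * m - (16 / π ^ 3) * m ^ 2)| ≤ C * m ^ 3 := by
  refine ⟨10, by norm_num, 1/10, by norm_num, ?_⟩
  intro m hm
  obtain ⟨hm0, hm1⟩ := hm
  obtain ⟨⟨hklo, hkhi⟩, heq⟩ := hk1 m hm0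
  have hpi1 : (3.14 : ℝ) < π := pi_gt_d2
  have hpi2 : π < 3.15 := pi_lt_d2
  have hpipos : (0 : ℝ) < π := by linarith
  set k := k1 m with hk
  clear_value k
  obtain ⟨ε, hε0, hε1, hkk⟩ : ∃ ε : ℝ, 0 ≤ ε ∧ ε ≤ π / 4 ∧ k = π / 4 + ε :=
    ⟨k - π / 4, by linarith, by linarith, by ring⟩
  subst hkk
  have h2k : 2 * (π / 4 + ε) = 2 * ε + π / 2 := by ring
  rw [h2k, sin_add_pi_div_two, cos_add_pi_div_two] at heq
  have hE : m * Real.cos (2 * ε) = (π / 4 + ε) * Real.sin (2 * ε) := by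
    linarith [heq]
  have hS0 : 0 ≤ Real.sin (2 * ε) :=
    Real.sin_nonneg_of_nonneg_of_le_pi (by linarith) (by linarith)
  have hC1 : Real.cos (2 * ε) ≤ 1 := Real.cos_le_one _
  -- Step 1 : ε ≤ m
  have hmls : 2 / π * (2 * ε) ≤ Real.sin (2 * ε) :=
    Real.mul_le_sin (by linarith) (by linarith)
  have hεm : ε ≤ m := by
    have h1 : ε ≤ m * Real.cos (2 * ε) := by
      rw [hE]
      have : 2 / π * (2 * ε) * (π / 4) = ε := by field_simp; ring
      nlinarith [mul_nonneg hε0 hS0]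
    have h2 : m * Real.cos (2 * ε) ≤ m := by nlinarith
    linarith
  -- Taylor bounds
  have habs : |2 * ε| ≤ 1 := by rw [abs_of_nonneg (by linarith)]; linarith
  have hsb := Real.sin_bound habs
  have hcb := Real.cos_bound habs
  rw [abs_of_nonneg (by linarith : (0:ℝ) ≤ 2 * ε)] at hsb hcb
  have h3 : (2 * ε) ^ 3 ≤ (2 * m) ^ 3 := pow_le_pow_left₀ (by linarith) (by linarith) 3
  have h4 : (2 * ε) ^ 4 ≤ (2 * m) ^ 4 := pow_le_pow_left₀ (by linarith) (by linarith) 4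
  have h2 : (2 * ε) ^ 2 ≤ (2 * m) ^ 2 := pow_le_pow_left₀ (by linarith) (by linarith) 2
  have hm4 : m ^ 4 ≤ (1 / 10) * m ^ 3 := by nlinarith [pow_nonneg hm0 3]
  have hm3 : m ^ 3 ≤ (1 / 10) * m ^ 2 := by nlinarith [pow_nonneg hm0 2]
  have hε3 : (0:ℝ) ≤ (2 * ε) ^ 3 := by positivity
  have hε4 : (0:ℝ) ≤ (2 * ε) ^ 4 := by positivity
  have hv : |Real.sin (2 * ε) - 2 * ε| ≤ 2 * m ^ 3 := by
    have h5 : (2 * ε) ^ 5 ≤ (2 * ε) ^ 3 := by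
      have : (2 * ε) ^ 5 = (2 * ε) ^ 3 * (2 * ε) ^ 2 := by ring
      rw [this]; exact mul_le_of_le_one_right hε3 (by nlinarith)
    rw [abs_le] at hsb ⊢
    constructor <;> linarith [hsb.1, hsb.2]
  have hu : |Real.cos (2 * ε) - 1| ≤ 3 * m ^ 2 := by
    rw [abs_le] at hcb ⊢
    constructor <;> linarith [hcb.1, hcb.2]
  -- product bounds
  have hmu : |4 * m * (Real.cos (2 * ε) - 1)| ≤ 12 * m ^ 3 := by
    rw [show (4:ℝ) * m * (Real.cos (2 * ε) - 1) = (4 * m) * (Real.cos (2 * ε) - 1) by ring,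
      abs_mul, abs_of_nonneg (by linarith : (0:ℝ) ≤ 4 * m)]
    calc 4 * m * |Real.cos (2 * ε) - 1| ≤ 4 * m * (3 * m ^ 2) := by
          apply mul_le_mul_of_nonneg_left hu (by linarith)
      _ = 12 * m ^ 3 := by ring
  have hpv : |(π + 4 * ε) * (Real.sin (2 * ε) - 2 * ε)| ≤ 8 * m ^ 3 := by
    rw [abs_mul, abs_of_nonneg (by linarith : (0:ℝ) ≤ π + 4 * ε)]
    calc (π + 4 * ε) * |Real.sin (2 * ε) - 2 * ε| ≤ 4 * (2 * m ^ 3) := by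
          apply mul_le_mul (by linarith) hv (abs_nonneg _) (by norm_num)
      _ = 8 * m ^ 3 := by ring
  rw [abs_le] at hv hu hmu hpv
  -- key identity
  have key : 2 * π * ε - 4 * m =
      4 * m * (Real.cos (2 * ε) - 1) - 8 * ε ^ 2
        - (π + 4 * ε) * (Real.sin (2 * ε) - 2 * ε) := by
    linear_combination (-4) * hE
  -- first-order bound
  have hd1 : |2 * π * ε - 4 * m| ≤ 10 * m ^ 2 := by
    rw [abs_le]
    constructor <;> linarith [hmu.1, hmu.2, hpv.1, hpv.2, h2, hm3, sq_nonneg ε, sq_nonneg m]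
  have hd1' : |ε - 2 * m / π| ≤ 2 * m ^ 2 := by
    have hrw : ε - 2 * m / π = (2 * π * ε - 4 * m) / (2 * π) := by
      field_simp; ring
    rw [hrw, abs_div, abs_of_pos (by linarith : (0:ℝ) < 2 * π),
      div_le_iff₀ (by linarith : (0:ℝ) < 2 * π)]
    nlinarith [hd1, sq_nonneg m]
  -- quadratic bound
  have hq : |ε ^ 2 - 4 * m ^ 2 / π ^ 2| ≤ 4 * m ^ 3 := by
    have hrw : ε ^ 2 - 4 * m ^ 2 / π ^ 2 = (ε - 2 * m / π) * (ε + 2 * m / π) := by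
      field_simp; ring
    rw [hrw, abs_mul]
    have h1 : |ε + 2 * m / π| ≤ 2 * m := by
      rw [abs_of_nonneg (by positivity)]
      have : 2 * m / π ≤ m := by
        rw [div_le_iff₀ hpipos]; nlinarith
      linarith
    calc |ε - 2 * m / π| * |ε + 2 * m / π| ≤ 2 * m ^ 2 * (2 * m) := by
          apply mul_le_mul hd1' h1 (abs_nonneg _) (by positivity)
      _ = 4 * m ^ 3 := by ring
  rw [abs_le] at hq
  -- final bound
  have key2 : 2 * π * ε - 4 * m + 32 * m ^ 2 / π ^ 2 =
      4 * m * (Real.cos (2 * ε) - 1) - 8 * (ε ^ 2 - 4 * m ^ 2 / π ^ 2)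
        - (π + 4 * ε) * (Real.sin (2 * ε) - 2 * ε) := by
    linear_combination key
  have hfin : |2 * π * ε - 4 * m + 32 * m ^ 2 / π ^ 2| ≤ 52 * m ^ 3 := by
    rw [abs_le]
    constructor <;> linarith [hmu.1, hmu.2, hpv.1, hpv.2, hq.1, hq.2]
  have hrw2 : π / 4 + ε - (π / 4 + 2 / π * m - 16 / π ^ 3 * m ^ 2)
      = (2 * π * ε - 4 * m + 32 * m ^ 2 / π ^ 2) / (2 * π) := by
    field_simp; ring
  rw [hrw2, abs_div, abs_of_pos (by linarith : (0:ℝ) < 2 * π),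
    div_le_iff₀ (by linarith : (0:ℝ) < 2 * π)]
  nlinarith [hfin, pow_nonneg hm0 3]
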